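/- Let (X,T) be a simple, properly ordered Bratteli-Vershik system. If (X,T) is weakly well timed, then every telescoping of (X,T) is weakly well timed. -/

import Mathlib

set_option autoImplicit false

/-- An ordered Bratteli diagram: finite nonempty vertex sets `V n`, a single root
vertex at level `0`, finite edge sets `E n` (edges from level `n` to level `n+1`,
multiple edges allowed), every vertex has an outgoing edge, every non-root vertex
an incoming edge, and the edges into each vertex carry a linear order, encoded by
the relation `elt` which relates only edges with the same target. -/
structure BDiagram where
  V : ℕ → Type
  E : ℕ → Type
  fintV : ∀ n, Fintype (V n)
  fintE : ∀ n, Fintype (E n)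
  nonV : ∀ n, Nonempty (V n)
  rootSubsingleton : Subsingleton (V 0)
  src : ∀ {n}, E n → V n
  tgt : ∀ {n}, E n → V (n + 1)
  hasOut : ∀ (n : ℕ) (v : V n), ∃ e : E n, src e = v
  hasIn : ∀ (n : ℕ) (v : V (n + 1)), ∃ e : E n, tgt e = v
  elt : ∀ {n}, E n → E n → Prop
  elt_tgt : ∀ (n : ℕ) (e f : E n), elt e f → tgt e = tgt f
  elt_irrefl : ∀ (n : ℕ) (e : E n), ¬ elt e e
  elt_trans : ∀ (n : ℕ) (e f g : E n), elt e f → elt f g → elt e g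
  elt_total : ∀ (n : ℕ) (e f : E n), tgt e = tgt f → e ≠ f → elt e f ∨ elt f e

namespace BDiagram

variable (B : BDiagram)

def castV {m n : ℕ} (h : m = n) (v : B.V m) : B.V n := h ▸ v

/-- An edge is minimal if no edge (into the same target) is below it. -/
def IsMinEdge {n : ℕ} (e : B.E n) : Prop := ∀ e' : B.E n, ¬ B.elt e' e

/-- An edge is maximal if no edge (into the same target) is above it. -/
def IsMaxEdge {n : ℕ} (e : B.E n) : Prop := ∀ e' : B.E n, ¬ B.elt e e'

/-- The space of infinite paths from the root. -/
def PathSpace : Type := { x : ∀ n, B.E n // ∀ n, B.tgt (x n) = B.src (x (n + 1)) }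

def IsMinPath (x : B.PathSpace) : Prop := ∀ n, B.IsMinEdge (x.1 n)

def IsMaxPath (x : B.PathSpace) : Prop := ∀ n, B.IsMaxEdge (x.1 n)

/-- Properly ordered: unique minimal and unique maximal path. -/
def ProperlyOrdered : Prop :=
  (∃! x : B.PathSpace, B.IsMinPath x) ∧ (∃! x : B.PathSpace, B.IsMaxPath x)

/-- The partial order on cofinal paths: `x < y` iff they eventually agree and at the
last disagreement the edge of `x` is below the edge of `y`. -/
def pathLT (x y : B.PathSpace) : Prop :=
  ∃ N : ℕ, B.elt (x.1 N) (y.1 N) ∧ ∀ n : ℕ, N < n → x.1 n = y.1 n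

/-- `T` is the Vershik map: each non-maximal path goes to its successor, and each
maximal path goes to a minimal path. -/
def IsVershik (T : B.PathSpace ≃ B.PathSpace) : Prop :=
  (∀ x : B.PathSpace, ¬ B.IsMaxPath x →
    B.pathLT x (T x) ∧ ∀ z : B.PathSpace, B.pathLT x z → ¬ B.pathLT z (T x)) ∧
  (∀ x : B.PathSpace, B.IsMaxPath x → B.IsMinPath (T x))

/-- `f` is a chain of consecutive edges on levels `[a, b)`. -/
def SegOn (f : ∀ i, B.E i) (a b : ℕ) : Prop :=
  ∀ i : ℕ, a ≤ i → i + 1 < b → B.tgt (f i) = B.src (f (i + 1))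

/-- Simplicity: some telescoping has complete connections between adjacent levels. -/
def Simple : Prop :=
  ∃ ns : ℕ → ℕ, StrictMono ns ∧ ns 0 = 0 ∧
    ∀ (l c : ℕ), ns (l + 1) = c + 1 →
      ∀ (v : B.V (ns l)) (w : B.V (c + 1)),
        ∃ f : ∀ i, B.E i, B.SegOn f (ns l) (c + 1) ∧ B.src (f (ns l)) = v ∧ B.tgt (f c) = w

/-- The natural (Cantor) topology on the path space, induced from the product of
the discrete topologies on the edge sets. -/
def pathTop : TopologicalSpace B.PathSpace :=
  TopologicalSpace.induced Subtype.val (@Pi.topologicalSpace ℕ B.E (fun _ => ⊥))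

/-- Integer iterates of a bijection of the path space. -/
def iterZ (T : B.PathSpace ≃ B.PathSpace) (m : ℤ) : B.PathSpace ≃ B.PathSpace :=
  (T : Equiv.Perm B.PathSpace) ^ m

/-- Two paths have the same `k`-coding: for every time `m` the initial segments of
`T^m x` and `T^m y` from the root to level `k` coincide. -/
def SameCoding (T : B.PathSpace ≃ B.PathSpace) (k : ℕ) (x y : B.PathSpace) : Prop :=
  ∀ (m : ℤ) (i : ℕ), i < k → ((B.iterZ T m) x).1 i = ((B.iterZ T m) y).1 i

/-- A depth `k` pair: distinct paths with the same `k`-coding but not the same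
`(k+1)`-coding. -/
def DepthPair (T : B.PathSpace ≃ B.PathSpace) (k : ℕ) (x y : B.PathSpace) : Prop :=
  x ≠ y ∧ B.SameCoding T k x y ∧ ¬ B.SameCoding T (k + 1) x y

/-- The pair `x, y` has a `j` cut: for some time `m`, both `T^m x` and `T^m y` are
minimal from the root into level `j`. -/
def HasCut (T : B.PathSpace ≃ B.PathSpace) (j : ℕ) (x y : B.PathSpace) : Prop :=
  ∃ m : ℤ, (∀ i : ℕ, i < j → B.IsMinEdge (((B.iterZ T m) x).1 i)) ∧
    (∀ i : ℕ, i < j → B.IsMinEdge (((B.iterZ T m) y).1 i))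

/-- Nonexpansive: for every `k ≥ 1` there are two distinct paths with the same
`k`-coding. -/
def Nonexpansive (T : B.PathSpace ≃ B.PathSpace) : Prop :=
  ∀ k : ℕ, 1 ≤ k → ∃ x y : B.PathSpace, x ≠ y ∧ B.SameCoding T k x y

/-- Well timed: for every `k ≥ 1` and every `j > k` there is a depth `k` pair with
a `j` cut. -/
def WellTimed (T : B.PathSpace ≃ B.PathSpace) : Prop :=
  ∀ k : ℕ, 1 ≤ k → ∀ j : ℕ, k < j →
    ∃ x y : B.PathSpace, B.DepthPair T k x y ∧ B.HasCut T j x y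

/-- Very well timed: for every `k ≥ 1` there is a depth `k` pair having a `j` cut
for every `j > k`. -/
def VeryWellTimed (T : B.PathSpace ≃ B.PathSpace) : Prop :=
  ∀ k : ℕ, 1 ≤ k →
    ∃ x y : B.PathSpace, B.DepthPair T k x y ∧ ∀ j : ℕ, k < j → B.HasCut T j x y

/-- Weakly well timed: for infinitely many `k ≥ 1`, for every `j > k` there is a
depth `k` pair with a `j` cut. -/
def WeaklyWellTimed (T : B.PathSpace ≃ B.PathSpace) : Prop :=
  ∀ K : ℕ, ∃ k : ℕ, K ≤ k ∧ 1 ≤ k ∧ ∀ j : ℕ, k < j →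
    ∃ x y : B.PathSpace, B.DepthPair T k x y ∧ B.HasCut T j x y

/-- Untimed: for every `k ≥ 1` there is a `j > k` such that no depth `k` pair has a
`j` cut. -/
def Untimed (T : B.PathSpace ≃ B.PathSpace) : Prop :=
  ∀ k : ℕ, 1 ≤ k → ∃ j : ℕ, k < j ∧
    ∀ x y : B.PathSpace, B.DepthPair T k x y → ¬ B.HasCut T j x y

/-- Very untimed: for every `k ≥ 1`, no depth `k` pair has a `(k+1)` cut. -/
def VeryUntimed (T : B.PathSpace ≃ B.PathSpace) : Prop :=
  ∀ k : ℕ, 1 ≤ k →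
    ∀ x y : B.PathSpace, B.DepthPair T k x y → ¬ B.HasCut T (k + 1) x y

/-- Finite paths from the root to level `n`. -/
def FinPath (n : ℕ) : Type :=
  { f : (i : Fin n) → B.E i.val //
    ∀ (i : ℕ) (h : i + 1 < n), B.tgt (f ⟨i, by omega⟩) = B.src (f ⟨i + 1, h⟩) }

/-- The lexicographic (from the end) order on finite paths to level `n` induced by
the orders on the edges. -/
def finLT {n : ℕ} (p q : B.FinPath n) : Prop :=
  ∃ (N : ℕ) (h : N < n), B.elt (p.1 ⟨N, h⟩) (q.1 ⟨N, h⟩) ∧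
    ∀ (i : ℕ) (hi : i < n), N < i → p.1 ⟨i, hi⟩ = q.1 ⟨i, hi⟩

/-- The finite path `p` to level `n` ends at the vertex `v`. -/
def EndsAt {n : ℕ} (p : B.FinPath n) (v : B.V n) : Prop :=
  ∀ (m : ℕ) (h : n = m + 1), B.tgt (p.1 ⟨m, by omega⟩) = B.castV h v

/-- The initial segment of an infinite path, from the root to level `n`. -/
def pathInit (x : B.PathSpace) (n : ℕ) : B.FinPath n :=
  ⟨fun i => x.1 i.val, fun i _ => x.2 i⟩

/-- The vertex of an infinite path at level `n`. -/
def pathVert (x : B.PathSpace) (n : ℕ) : B.V n := B.src (x.1 n)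

theorem pathInit_endsAt (x : B.PathSpace) (n : ℕ) :
    B.EndsAt (B.pathInit x n) (B.pathVert x n) := by
  intro m h
  subst h
  exact x.2 m

/-- Truncation of a finite path to a lower level. -/
def truncTo {n : ℕ} (k : ℕ) (hk : k ≤ n) (p : B.FinPath n) : B.FinPath k :=
  ⟨fun i => p.1 ⟨i.val, by omega⟩, fun i h => p.2 i (by omega)⟩

/-- Paths `x, x'` are `k`-equivalent at level `n`: there is an order isomorphism
between the sets of finite paths from the root into their level-`n` vertices which
preserves truncations to level `k` (equality of `k`-basic blocks) and which matches
the initial segment of `x` with the initial segment of `x'` (the "dot" is in the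
same place). -/
def KEquivAt (k n : ℕ) (x x' : B.PathSpace) : Prop :=
  ∃ φ : { p : B.FinPath n // B.EndsAt p (B.pathVert x n) } ≃
      { p : B.FinPath n // B.EndsAt p (B.pathVert x' n) },
    (∀ p q, B.finLT p.1 q.1 ↔ B.finLT (φ p).1 (φ q).1) ∧
    (∀ p (i : ℕ) (hik : i < k) (hin : i < n), ((φ p).1).1 ⟨i, hin⟩ = (p.1).1 ⟨i, hin⟩) ∧
    φ ⟨B.pathInit x n, B.pathInit_endsAt x n⟩ = ⟨B.pathInit x' n, B.pathInit_endsAt x' n⟩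

/-- Paths are `k`-equivalent: they agree from the root to level `k` and are
`k`-equivalent at every level `n > k`. -/
def KEquivPaths (k : ℕ) (x x' : B.PathSpace) : Prop :=
  (∀ i : ℕ, i < k → x.1 i = x'.1 i) ∧ ∀ n : ℕ, k < n → B.KEquivAt k n x x'

/-- Standard nonexpansive: for every `k ≥ 1` there is a pair of distinct
`k`-equivalent paths. -/
def SNE : Prop := ∀ k : ℕ, 1 ≤ k → ∃ x x' : B.PathSpace, x ≠ x' ∧ B.KEquivPaths k x x'

/-!  ### Telescoping  -/

theorem castV_eq_of_heq {m n : ℕ} (h : m = n) {v : B.V m} {w : B.V n} (hw : HEq v w) :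
    B.castV h v = w := by
  subst h
  exact eq_of_heq hw

theorem castV_heq {m n : ℕ} (h : m = n) (v : B.V m) : HEq (B.castV h v) v := by
  subst h
  rfl

theorem castV_inj {m n : ℕ} (h : m = n) {v w : B.V m}
    (hvw : B.castV h v = B.castV h w) : v = w := by
  subst h
  exact hvw

def castE {m n : ℕ} (h : m = n) (e : B.E m) : B.E n := h ▸ e

noncomputable def chainFrom (a : ℕ) (v : B.V a) : (i : ℕ) → B.E (a + i)
  | 0 => (B.hasOut a v).choose
  | i + 1 => (B.hasOut (a + i + 1) (B.tgt (chainFrom a v i))).choose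

theorem chainFrom_src_zero (a : ℕ) (v : B.V a) : B.src (B.chainFrom a v 0) = v :=
  (B.hasOut a v).choose_spec

theorem chainFrom_src_succ (a : ℕ) (v : B.V a) (i : ℕ) :
    B.src (B.chainFrom a v (i + 1)) = B.tgt (B.chainFrom a v i) :=
  (B.hasOut (a + i + 1) (B.tgt (B.chainFrom a v i))).choose_spec

noncomputable def chainTo (a : ℕ) : (j : ℕ) → (w : B.V (a + j + 1)) → (i : ℕ) → i ≤ j → B.E (a + i)
  | 0, w, i, _ => B.castE (by omega : a + 0 = a + i) (B.hasIn a w).choose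
  | j + 1, w, i, _ =>
      if h : i ≤ j then chainTo a j (B.src (B.hasIn (a + j + 1) w).choose) i h
      else B.castE (by omega : a + (j + 1) = a + i) (B.hasIn (a + j + 1) w).choose

theorem chainTo_tgt_last (a : ℕ) : ∀ (j : ℕ) (w : B.V (a + j + 1)),
    B.tgt (B.chainTo a j w j le_rfl) = w := by
  intro j w
  cases j with
  | zero =>
      simp only [chainTo]
      exact (B.hasIn a w).choose_spec
  | succ j =>
      simp only [chainTo]
      rw [dif_neg (by omega : ¬ j + 1 ≤ j)]
      exact (B.hasIn (a + j + 1) w).choose_spec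

theorem chainTo_chain (a : ℕ) : ∀ (j : ℕ) (w : B.V (a + j + 1)) (i : ℕ) (h : i + 1 ≤ j)
    (h' : i ≤ j), B.tgt (B.chainTo a j w i h') = B.src (B.chainTo a j w (i + 1) h) := by
  intro j
  induction j with
  | zero => intro w i h h'; omega
  | succ j ih =>
      intro w i h h'
      by_cases hij : i + 1 ≤ j
      · simp only [chainTo]
        rw [dif_pos (by omega : i ≤ j), dif_pos hij]
        exact ih _ i hij (by omega)
      · have hi : i = j := by omega
        subst hi
        simp only [chainTo]
        rw [dif_pos (le_refl i), dif_neg (by omega : ¬ i + 1 ≤ i)]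
        exact B.chainTo_tgt_last a i _


def TelE (a b : ℕ) : Type :=
  { f : (i : Fin (b - a)) → B.E (a + i.val) //
    ∀ (i : ℕ) (h : i + 1 < b - a), B.tgt (f ⟨i, by omega⟩) = B.src (f ⟨i + 1, h⟩) }

def telSrc {a b : ℕ} (hab : a < b) (f : B.TelE a b) : B.V a :=
  B.src (f.1 ⟨0, by omega⟩)

def telTgt {a b : ℕ} (hab : a < b) (f : B.TelE a b) : B.V b :=
  B.castV (by omega : a + (b - a - 1) + 1 = b) (B.tgt (f.1 ⟨b - a - 1, by omega⟩))

def telLT {a b : ℕ} (f g : B.TelE a b) : Prop :=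
  ∃ (N : ℕ) (h : N < b - a), B.elt (f.1 ⟨N, h⟩) (g.1 ⟨N, h⟩) ∧
    ∀ (i : ℕ) (hi : i < b - a), N < i → f.1 ⟨i, hi⟩ = g.1 ⟨i, hi⟩

noncomputable def Telescope (ns : ℕ → ℕ) (hmono : StrictMono ns) (h0 : ns 0 = 0) : BDiagram where
  V l := B.V (ns l)
  E l := B.TelE (ns l) (ns (l + 1))
  fintV l := B.fintV (ns l)
  fintE l := by
    classical
    letI : ∀ i : Fin (ns (l + 1) - ns l), Fintype (B.E (ns l + i.val)) := fun i => B.fintE _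
    exact Subtype.fintype _
  nonV l := B.nonV (ns l)
  rootSubsingleton := by show Subsingleton (B.V (ns 0)); rw [h0]; exact B.rootSubsingleton
  src {l} f := B.telSrc (hmono (Nat.lt_succ_self l)) f
  tgt {l} f := B.telTgt (hmono (Nat.lt_succ_self l)) f
  hasOut := by
    intro l v
    refine ⟨⟨fun i => B.chainFrom (ns l) v i.val,
      fun i h => (B.chainFrom_src_succ (ns l) v i).symm⟩, ?_⟩
    exact B.chainFrom_src_zero (ns l) v
  hasIn := by
    intro l w
    have hab : ns l < ns (l + 1) := hmono (Nat.lt_succ_self l)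
    have hj : ns l + (ns (l + 1) - ns l - 1) + 1 = ns (l + 1) := by omega
    refine ⟨⟨fun i => B.chainTo (ns l) (ns (l + 1) - ns l - 1) (B.castV hj.symm w) i.val
        (by omega), fun i h => B.chainTo_chain _ _ _ i (by omega) (by omega)⟩, ?_⟩
    show B.castV (by omega) (B.tgt (B.chainTo (ns l) (ns (l + 1) - ns l - 1)
      (B.castV hj.symm w) (ns (l + 1) - ns l - 1) (by omega))) = w
    rw [B.chainTo_tgt_last]
    exact B.castV_eq_of_heq _ (B.castV_heq _ w)
  elt {l} f g := B.telLT f g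
  elt_tgt := by
    rintro l f g ⟨N, hN, hlt, hgt⟩
    show B.telTgt _ f = B.telTgt _ g
    unfold telTgt
    refine congrArg (B.castV _) ?_
    rcases eq_or_lt_of_le (show N ≤ ns (l + 1) - ns l - 1 by omega) with h | h
    · subst h
      exact B.elt_tgt _ _ _ hlt
    · exact congrArg B.tgt (hgt _ (by omega) h)
  elt_irrefl := by
    rintro l f ⟨N, h, hlt, -⟩
    exact B.elt_irrefl _ _ hlt
  elt_trans := by
    rintro l f g h ⟨N₁, hN₁, hlt₁, hgt₁⟩ ⟨N₂, hN₂, hlt₂, hgt₂⟩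
    rcases lt_trichotomy N₁ N₂ with hc | hc | hc
    · exact ⟨N₂, hN₂, by rw [hgt₁ N₂ hN₂ hc]; exact hlt₂,
        fun i hi hN => (hgt₁ i hi (by omega)).trans (hgt₂ i hi hN)⟩
    · subst hc
      exact ⟨N₁, hN₁, B.elt_trans _ _ _ _ hlt₁ hlt₂,
        fun i hi hN => (hgt₁ i hi hN).trans (hgt₂ i hi hN)⟩
    · refine ⟨N₁, hN₁, ?_, fun i hi hN => (hgt₁ i hi hN).trans (hgt₂ i hi (by omega))⟩
      rw [← hgt₂ N₁ hN₁ hc]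
      exact hlt₁
  elt_total := by
    intro l f g htgt hne
    classical
    have hab : ns l < ns (l + 1) := hmono (Nat.lt_succ_self l)
    set b := ns (l + 1) - ns l with hb
    have hex : ∃ N, ∃ h : N < b, f.1 ⟨N, h⟩ ≠ g.1 ⟨N, h⟩ := by
      by_contra hco
      push_neg at hco
      exact hne (Subtype.ext (funext fun i => hco i.val i.isLt))
    set P : ℕ → Prop := fun N => ∃ h : N < b, f.1 ⟨N, h⟩ ≠ g.1 ⟨N, h⟩ with hP
    obtain ⟨N₀, hN₀⟩ := hex
    set N := Nat.findGreatest P b with hNdef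
    have hPN : P N := Nat.findGreatest_spec (le_of_lt hN₀.choose) hN₀
    have hafter : ∀ i (hi : i < b), N < i → f.1 ⟨i, hi⟩ = g.1 ⟨i, hi⟩ := by
      intro i hi hNi
      by_contra hcon
      exact Nat.findGreatest_is_greatest hNi (le_of_lt hi) ⟨hi, hcon⟩
    clear_value N
    obtain ⟨hNb, hNne⟩ := hPN
    have htgtN : B.tgt (f.1 ⟨N, hNb⟩) = B.tgt (g.1 ⟨N, hNb⟩) := by
      rcases eq_or_lt_of_le (show N ≤ b - 1 by omega) with h | h
      · -- N is the last index; use equality of targets of the composite edges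
        subst h
        exact B.castV_inj _ htgt
      · have h2 : f.1 ⟨N + 1, by omega⟩ = g.1 ⟨N + 1, by omega⟩ :=
          hafter (N + 1) (by omega) (by omega)
        rw [f.2 N (by omega), g.2 N (by omega), h2]
    rcases B.elt_total _ _ _ htgtN hNne with h | h
    · exact Or.inl ⟨N, hNb, h, hafter⟩
    · exact Or.inr ⟨N, hNb, h, fun i hi hN => (hafter i hi hN).symm⟩

def teleMap (ns : ℕ → ℕ) (hmono : StrictMono ns) (h0 : ns 0 = 0) (x : B.PathSpace) :
    (B.Telescope ns hmono h0).PathSpace :=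
  ⟨fun l => ⟨fun i => x.1 (ns l + i.val), fun i _ => x.2 (ns l + i)⟩, fun l => by
    have hab : ns l < ns (l + 1) := hmono (Nat.lt_succ_self l)
    have hm : ns l + (ns (l + 1) - ns l - 1) + 1 = ns (l + 1) := by omega
    show B.castV _ (B.tgt (x.1 (ns l + (ns (l + 1) - ns l - 1)))) = B.src (x.1 (ns (l + 1) + 0))
    rw [x.2 (ns l + (ns (l + 1) - ns l - 1))]
    exact B.castV_eq_of_heq _ (by rw [hm]; exact HEq.rfl)⟩


/-- Level `n+1` is uniformly ordered: there is a single nonempty block `P` of paths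
from the root to level `n` such that the `n`-basic block at every vertex at level
`n+1` is a positive power of `P`. -/
def UniformlyOrderedLevel (n : ℕ) : Prop :=
  ∃ (p : ℕ) (hp : 0 < p) (P : Fin p → B.FinPath n),
    ∀ v : B.V (n + 1), ∃ (m : ℕ), 0 < m ∧
      ∃ enum : Fin (m * p) ≃ { q : B.FinPath (n + 1) // B.EndsAt q v },
        (∀ i j : Fin (m * p), i < j ↔ B.finLT (enum i).1 (enum j).1) ∧
        (∀ i : Fin (m * p),
          B.truncTo n (Nat.le_succ n) (enum i).1 = P ⟨i.val % p, Nat.mod_lt _ hp⟩)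

/-- The ordinal label of an edge: its position in the linear order on the edges
into its target. -/
noncomputable def edgeLabel {n : ℕ} (e : B.E n) : ℕ := Nat.card { e' : B.E n // B.elt e' e }

/-- Deterministic: for every `n ≥ 1`, distinct edges with the same source at level
`n` have different ordinal labels. -/
def Deterministic : Prop :=
  ∀ n : ℕ, 1 ≤ n → ∀ e f : B.E n, B.src e = B.src f → e ≠ f →
    B.edgeLabel e ≠ B.edgeLabel f

end BDiagram

/-- A Bratteli–Vershik system: a simple, properly ordered ordered Bratteli diagram
together with its Vershik map. -/
structure BVSystem where
  B : BDiagram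
  T : B.PathSpace ≃ B.PathSpace
  proper : B.ProperlyOrdered
  simple : B.Simple
  vershik : B.IsVershik T

/-- Conjugacy of systems: an equivariant homeomorphism of the path spaces taking
minimal paths to minimal paths. -/
def Conjugate (S S' : BVSystem) : Prop :=
  ∃ φ : S.B.PathSpace ≃ S'.B.PathSpace,
    (@Continuous _ _ S.B.pathTop S'.B.pathTop φ) ∧
    (@Continuous _ _ S'.B.pathTop S.B.pathTop φ.symm) ∧
    (∀ x, φ (S.T x) = S'.T (φ x)) ∧
    (∀ x, S.B.IsMinPath x → S'.B.IsMinPath (φ x))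

/-- An odometer: a system whose diagram has exactly one vertex at every level. -/
def IsOdometer (S : BVSystem) : Prop := ∀ n, Subsingleton (S.B.V n)

section Aux

theorem perm_conj_zpow {α β : Type*} (e : α ≃ β) (p : Equiv.Perm α) (p' : Equiv.Perm β)
    (h : ∀ a, p' (e a) = e (p a)) (m : ℤ) : ∀ a : α, (p' ^ m) (e a) = e ((p ^ m) a) := by
  have hinv : ∀ a, p'⁻¹ (e a) = e (p⁻¹ a) := by
    intro a
    have h2 := h (p⁻¹ a)
    rw [Equiv.Perm.coe_inv, Equiv.apply_symm_apply] at h2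
    rw [← h2, Equiv.Perm.coe_inv, Equiv.symm_apply_apply, Equiv.Perm.coe_inv]
  induction m using Int.induction_on with
  | zero => intro a; simp
  | succ k ih =>
      intro a
      rw [zpow_add_one, zpow_add_one, Equiv.Perm.mul_apply, Equiv.Perm.mul_apply, h, ih]
  | pred k ih =>
      intro a
      rw [zpow_sub_one, zpow_sub_one, Equiv.Perm.mul_apply, Equiv.Perm.mul_apply, hinv, ih]

namespace BDiagram

variable (B : BDiagram)

theorem castE_eq_of_heq {m n : ℕ} (h : m = n) {e : B.E m} {f : B.E n} (hef : HEq e f) :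
    B.castE h e = f := by subst h; exact eq_of_heq hef

theorem castE_heq {m n : ℕ} (h : m = n) (e : B.E m) : HEq (B.castE h e) e := by
  subst h; rfl

theorem src_castE {m n : ℕ} (h : m = n) (e : B.E m) :
    B.src (B.castE h e) = B.castV h (B.src e) := by subst h; rfl

theorem tgt_castE {m n : ℕ} (h : m = n) (e : B.E m) :
    B.tgt (B.castE h e) = B.castV (by omega) (B.tgt e) := by subst h; rfl

theorem castV_castV_of_heq {p q n : ℕ} (h1 : p = n) (h2 : q = n) {v : B.V p} {w : B.V q}
    (hvw : HEq v w) : B.castV h1 v = B.castV h2 w := by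
  subst h1; subst h2; exact congrArg _ (eq_of_heq hvw)

theorem heq_pathApply (x : ∀ n, B.E n) {m n : ℕ} (h : m = n) : HEq (x m) (x n) := by
  subst h; rfl

theorem src_heq {m n : ℕ} (h : m = n) {e : B.E m} {e' : B.E n} (he : HEq e e') :
    HEq (B.src e) (B.src e') := by subst h; rw [eq_of_heq he]

theorem tgt_heq {m n : ℕ} (h : m = n) {e : B.E m} {e' : B.E n} (he : HEq e e') :
    HEq (B.tgt e) (B.tgt e') := by subst h; rw [eq_of_heq he]

theorem elt_idx {m n : ℕ} (h : m = n) (x y : ∀ k, B.E k) (he : B.elt (x m) (y m)) :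
    B.elt (x n) (y n) := by subst h; exact he

theorem telE_comp_heq {a b : ℕ} (f : B.TelE a b) (j1 j2 : Fin (b - a)) (h : j1.val = j2.val) :
    HEq (f.1 j1) (f.1 j2) := by
  have h' : j1 = j2 := Fin.ext h
  subst h'; rfl

/-- Two cofinal distinct paths are comparable. -/
theorem pathLT_total (x y : B.PathSpace) (hne : x ≠ y) (M : ℕ)
    (hM : ∀ n, M < n → x.1 n = y.1 n) : B.pathLT x y ∨ B.pathLT y x := by
  classical
  have hex : ∃ n, x.1 n ≠ y.1 n := by
    by_contra hc
    push_neg at hc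
    exact hne (Subtype.ext (funext hc))
  obtain ⟨n₀, hn₀⟩ := hex
  have hn₀M : n₀ ≤ M := by
    by_contra hc
    exact hn₀ (hM n₀ (by omega))
  set P : ℕ → Prop := fun n => x.1 n ≠ y.1 n with hP
  set N := Nat.findGreatest P M with hN
  have hPN : P N := Nat.findGreatest_spec hn₀M hn₀
  have hup : ∀ n, N < n → x.1 n = y.1 n := by
    intro n hn
    by_cases h : n ≤ M
    · by_contra hc
      exact Nat.findGreatest_is_greatest hn h hc
    · exact hM n (by omega)
  have htgt : B.tgt (x.1 N) = B.tgt (y.1 N) := by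
    rw [x.2 N, y.2 N, hup (N + 1) (by omega)]
  rcases B.elt_total N (x.1 N) (y.1 N) htgt hPN with h | h
  · exact Or.inl ⟨N, h, hup⟩
  · exact Or.inr ⟨N, h, fun n hn => (hup n hn).symm⟩

/-- Successors are unique. -/
theorem succ_unique (x a b : B.PathSpace)
    (ha : B.pathLT x a ∧ ∀ z, B.pathLT x z → ¬ B.pathLT z a)
    (hb : B.pathLT x b ∧ ∀ z, B.pathLT x z → ¬ B.pathLT z b) : a = b := by
  by_contra hne
  obtain ⟨Na, -, hNa⟩ := ha.1
  obtain ⟨Nb, -, hNb⟩ := hb.1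
  have hco : ∀ n, max Na Nb < n → a.1 n = b.1 n := fun n hn =>
    (hNa n (by omega)).symm.trans (hNb n (by omega))
  rcases B.pathLT_total a b hne _ hco with h | h
  · exact hb.2 a ha.1 h
  · exact ha.2 b hb.1 h

end BDiagram
end Aux
namespace BDiagram

variable (B : BDiagram)

noncomputable def modifyFun {a b : ℕ} (f : B.TelE a b) (N : ℕ) (e : B.E (a + N)) :
    (j : Fin (b - a)) → B.E (a + j.val) := fun j =>
  if h : j.val < N then
    B.chainTo a (N - 1) (B.castV (by omega) (B.src e)) j.val (by omega)
  else if h2 : j.val = N then B.castE (by omega) e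
  else f.1 j

theorem exists_modify {a b : ℕ} (f : B.TelE a b) (N : ℕ) (hN : N < b - a)
    (e : B.E (a + N)) (hte : B.tgt e = B.tgt (f.1 ⟨N, hN⟩)) :
    ∃ g : B.TelE a b, g.1 ⟨N, hN⟩ = e ∧
      ∀ (i : ℕ) (hi : i < b - a), N < i → g.1 ⟨i, hi⟩ = f.1 ⟨i, hi⟩ := by
  refine ⟨⟨B.modifyFun f N e, ?_⟩, ?_, ?_⟩
  · intro i h
    simp only [modifyFun]
    by_cases h1 : i + 1 < N
    · rw [dif_pos (show i < N by omega), dif_pos h1]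
      exact B.chainTo_chain a (N - 1) _ i (by omega) (by omega)
    · by_cases h2 : i + 1 = N
      · rw [dif_pos (show i < N by omega), dif_neg h1, dif_pos h2]
        have hi : i = N - 1 := by omega
        subst hi
        rw [B.chainTo_tgt_last, B.src_castE]
        try exact B.castV_castV_of_heq _ _ HEq.rfl
      · by_cases h3 : i = N
        · subst h3
          rw [dif_neg (lt_irrefl i), dif_pos rfl, dif_neg h1, dif_neg h2]
          rw [B.tgt_castE, hte, f.2 i h]
          try exact B.castV_eq_of_heq _ HEq.rfl
        · rw [dif_neg (show ¬ i < N by omega), dif_neg h3, dif_neg h1, dif_neg h2]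
          exact f.2 i h
  · simp only [modifyFun]
    rw [dif_neg (lt_irrefl N), dif_pos trivial]
    exact B.castE_eq_of_heq _ HEq.rfl
  · intro i hi hNi
    simp only [modifyFun]
    rw [dif_neg (show ¬ i < N by omega), dif_neg (show ¬ i = N by omega)]

theorem tel_min_iff {a b : ℕ} (f : B.TelE a b) :
    (∀ g : B.TelE a b, ¬ B.telLT g f) ↔
      ∀ (i : ℕ) (hi : i < b - a), B.IsMinEdge (f.1 ⟨i, hi⟩) := by
  constructor
  · intro h i hi e he
    obtain ⟨g, hg1, hg2⟩ := B.exists_modify f i hi e (B.elt_tgt _ _ _ he)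
    exact h g ⟨i, hi, by rw [hg1]; exact he, hg2⟩
  · intro h g hg
    obtain ⟨N, hN, hlt, -⟩ := hg
    exact h N hN _ hlt

theorem tel_max_iff {a b : ℕ} (f : B.TelE a b) :
    (∀ g : B.TelE a b, ¬ B.telLT f g) ↔
      ∀ (i : ℕ) (hi : i < b - a), B.IsMaxEdge (f.1 ⟨i, hi⟩) := by
  constructor
  · intro h i hi e he
    obtain ⟨g, hg1, hg2⟩ := B.exists_modify f i hi e (B.elt_tgt _ _ _ he).symm
    exact h g ⟨i, hi, by rw [hg1]; exact he, fun j hj hij => (hg2 j hj hij).symm⟩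
  · intro h g hg
    obtain ⟨N, hN, hlt, -⟩ := hg
    exact h N hN _ hlt

end BDiagram
/-- The level of the telescoping block containing original level `i`. -/
def tlvl (ns : ℕ → ℕ) (i : ℕ) : ℕ := Nat.findGreatest (fun l => ns l ≤ i) i

theorem tlvl_le (ns : ℕ → ℕ) (h0 : ns 0 = 0) (i : ℕ) : ns (tlvl ns i) ≤ i := by
  have h : ns (Nat.findGreatest (fun l => ns l ≤ i) i) ≤ i :=
    Nat.findGreatest_spec (P := fun l => ns l ≤ i) (Nat.zero_le i) (show ns 0 ≤ i by omega)
  exact h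

theorem tlvl_lt (ns : ℕ → ℕ) (hmono : StrictMono ns) (i : ℕ) : i < ns (tlvl ns i + 1) := by
  by_cases h : tlvl ns i + 1 ≤ i
  · have h2 : ¬ ns (tlvl ns i + 1) ≤ i :=
      Nat.findGreatest_is_greatest (P := fun l => ns l ≤ i)
        (show tlvl ns i < tlvl ns i + 1 by omega) h
    omega
  · have h1 : tlvl ns i ≤ i := Nat.findGreatest_le i
    have h2 : tlvl ns i + 1 ≤ ns (tlvl ns i + 1) := hmono.le_apply
    omega

theorem tlvl_eq (ns : ℕ → ℕ) (hmono : StrictMono ns) (h0 : ns 0 = 0) {l i : ℕ}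
    (h1 : ns l ≤ i) (h2 : i < ns (l + 1)) : tlvl ns i = l := by
  have ha := tlvl_le ns h0 i
  have hb := tlvl_lt ns hmono i
  rcases lt_trichotomy (tlvl ns i) l with h | h | h
  · have := hmono.monotone (show tlvl ns i + 1 ≤ l by omega)
    omega
  · exact h
  · have := hmono.monotone (show l + 1 ≤ tlvl ns i by omega)
    omega

namespace BDiagram

variable (B : BDiagram) (ns : ℕ → ℕ) (hmono : StrictMono ns) (h0 : ns 0 = 0)

noncomputable def flatE (y : (B.Telescope ns hmono h0).PathSpace) (i : ℕ) : B.E i :=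
  B.castE (show ns (tlvl ns i) + (i - ns (tlvl ns i)) = i by
      have h1 := tlvl_le ns h0 i; omega)
    ((y.1 (tlvl ns i)).1 ⟨i - ns (tlvl ns i), show
        i - ns (tlvl ns i) < ns (tlvl ns i + 1) - ns (tlvl ns i) by
      have h1 := tlvl_le ns h0 i
      have h2 := tlvl_lt ns hmono i
      omega⟩)

theorem flatE_spec (y : (B.Telescope ns hmono h0).PathSpace) (i l : ℕ)
    (h1 : ns l ≤ i) (h2 : i < ns (l + 1)) (hc : i - ns l < ns (l + 1) - ns l) :
    B.flatE ns hmono h0 y i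
      = B.castE (show ns l + (i - ns l) = i by omega) ((y.1 l).1 ⟨i - ns l, hc⟩) := by
  have hl : tlvl ns i = l := tlvl_eq ns hmono h0 h1 h2
  subst hl
  rfl

theorem flatE_chain (y : (B.Telescope ns hmono h0).PathSpace) (i : ℕ) :
    B.tgt (B.flatE ns hmono h0 y i) = B.src (B.flatE ns hmono h0 y (i + 1)) := by
  have h1 : ns (tlvl ns i) ≤ i := tlvl_le ns h0 i
  have h2 : i < ns (tlvl ns i + 1) := tlvl_lt ns hmono i
  set l := tlvl ns i with hl
  by_cases hcase : i + 1 < ns (l + 1)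
  · rw [B.flatE_spec ns hmono h0 y i l h1 h2 (by omega),
      B.flatE_spec ns hmono h0 y (i + 1) l (by omega) hcase (by omega),
      B.tgt_castE, B.src_castE]
    apply B.castV_castV_of_heq
    have hcomp := (y.1 l).2 (i - ns l) (show i - ns l + 1 < ns (l + 1) - ns l by omega)
    refine HEq.trans (heq_of_eq hcomp) ?_
    exact B.src_heq (show ns l + (i - ns l + 1) = ns l + (i + 1 - ns l) by omega)
      (B.telE_comp_heq (y.1 l) _ _ (show i - ns l + 1 = i + 1 - ns l from by omega))
  · have hl1 : i + 1 = ns (l + 1) := by omega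
    have hs1 : ns (l + 1) < ns (l + 1 + 1) := hmono (Nat.lt_succ_self (l + 1))
    rw [B.flatE_spec ns hmono h0 y i l h1 h2 (by omega),
      B.flatE_spec ns hmono h0 y (i + 1) (l + 1) (by omega) (by omega) (by omega),
      B.tgt_castE, B.src_castE]
    apply B.castV_castV_of_heq
    have hs0 : ns l < ns (l + 1) := hmono (Nat.lt_succ_self l)
    have hv : B.castV (show ns l + (ns (l + 1) - ns l - 1) + 1 = ns (l + 1) by omega)
        (B.tgt ((y.1 l).1 ⟨ns (l + 1) - ns l - 1, by omega⟩))
        = B.src ((y.1 (l + 1)).1 ⟨0, by omega⟩) := y.2 l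
    refine HEq.trans ?_ (HEq.trans (heq_of_eq hv) ?_)
    · refine HEq.trans ?_ (B.castV_heq _ _).symm
      exact B.tgt_heq (show ns l + (i - ns l) = ns l + (ns (l + 1) - ns l - 1) by omega)
        (B.telE_comp_heq (y.1 l) _ _ (show i - ns l = ns (l + 1) - ns l - 1 from by omega))
    · exact B.src_heq (show ns (l + 1) + 0 = ns (l + 1) + (i + 1 - ns (l + 1)) by omega)
        (B.telE_comp_heq (y.1 (l + 1)) _ _ (show (0:ℕ) = i + 1 - ns (l + 1) from by omega))

noncomputable def flatten (y : (B.Telescope ns hmono h0).PathSpace) : B.PathSpace :=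
  ⟨B.flatE ns hmono h0 y, B.flatE_chain ns hmono h0 y⟩

theorem flatten_teleMap (x : B.PathSpace) :
    B.flatten ns hmono h0 (B.teleMap ns hmono h0 x) = x := by
  refine Subtype.ext (funext fun i => ?_)
  have h1 : ns (tlvl ns i) ≤ i := tlvl_le ns h0 i
  exact B.castE_eq_of_heq _ (B.heq_pathApply x.1
    (show ns (tlvl ns i) + (i - ns (tlvl ns i)) = i by omega))

theorem teleMap_flatten (y : (B.Telescope ns hmono h0).PathSpace) :
    B.teleMap ns hmono h0 (B.flatten ns hmono h0 y) = y := by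
  refine Subtype.ext (funext fun l => ?_)
  refine Subtype.ext (funext fun i0 => ?_)
  have hj := i0.isLt
  show B.flatE ns hmono h0 y (ns l + i0.val) = (y.1 l).1 i0
  rw [B.flatE_spec ns hmono h0 y (ns l + i0.val) l (by omega) (by omega) (by omega)]
  refine B.castE_eq_of_heq _ ?_
  exact B.telE_comp_heq (y.1 l) _ _ (by simp)

noncomputable def teleEquiv : B.PathSpace ≃ (B.Telescope ns hmono h0).PathSpace where
  toFun := B.teleMap ns hmono h0
  invFun := B.flatten ns hmono h0
  left_inv := B.flatten_teleMap ns hmono h0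
  right_inv := B.teleMap_flatten ns hmono h0

end BDiagram
namespace BDiagram

variable (B : BDiagram) (ns : ℕ → ℕ) (hmono : StrictMono ns) (h0 : ns 0 = 0)

theorem teleMap_minPath_iff (x : B.PathSpace) :
    (B.Telescope ns hmono h0).IsMinPath (B.teleMap ns hmono h0 x) ↔ B.IsMinPath x := by
  constructor
  · intro h i
    have h1 : ns (tlvl ns i) ≤ i := tlvl_le ns h0 i
    have h2 : i < ns (tlvl ns i + 1) := tlvl_lt ns hmono i
    have hme := (B.tel_min_iff _).1 (h (tlvl ns i)) (i - ns (tlvl ns i)) (by omega)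
    have he : B.IsMinEdge (x.1 (ns (tlvl ns i) + (i - ns (tlvl ns i)))) := hme
    have hn : ns (tlvl ns i) + (i - ns (tlvl ns i)) = i := by omega
    exact hn ▸ he
  · intro h l
    exact (B.tel_min_iff _).2 (fun i0 hi0 => h (ns l + i0))

theorem teleMap_maxPath_iff (x : B.PathSpace) :
    (B.Telescope ns hmono h0).IsMaxPath (B.teleMap ns hmono h0 x) ↔ B.IsMaxPath x := by
  constructor
  · intro h i
    have h1 : ns (tlvl ns i) ≤ i := tlvl_le ns h0 i
    have h2 : i < ns (tlvl ns i + 1) := tlvl_lt ns hmono i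
    have hme := (B.tel_max_iff _).1 (h (tlvl ns i)) (i - ns (tlvl ns i)) (by omega)
    have he : B.IsMaxEdge (x.1 (ns (tlvl ns i) + (i - ns (tlvl ns i)))) := hme
    have hn : ns (tlvl ns i) + (i - ns (tlvl ns i)) = i := by omega
    exact hn ▸ he
  · intro h l
    exact (B.tel_max_iff _).2 (fun i0 hi0 => h (ns l + i0))

theorem teleMap_pathLT_iff (x y : B.PathSpace) :
    B.pathLT x y ↔
      (B.Telescope ns hmono h0).pathLT (B.teleMap ns hmono h0 x) (B.teleMap ns hmono h0 y) := by
  constructor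
  · rintro ⟨N, hlt, hup⟩
    have h1 : ns (tlvl ns N) ≤ N := tlvl_le ns h0 N
    have h2 : N < ns (tlvl ns N + 1) := tlvl_lt ns hmono N
    set l := tlvl ns N with hldef
    refine ⟨l, ?_, ?_⟩
    · show B.telLT _ _
      refine ⟨N - ns l, by omega, ?_, ?_⟩
      · exact B.elt_idx (show N = ns l + (N - ns l) by omega) x.1 y.1 hlt
      · intro i0 hi0 hN0
        exact hup (ns l + i0) (by omega)
    · intro m hm
      refine Subtype.ext (funext fun i0 => ?_)
      have hge : ns (l + 1) ≤ ns m := hmono.monotone (by omega)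
      exact hup (ns m + i0.val) (by omega)
  · rintro ⟨L, hel, hupL⟩
    have hel' : B.telLT ((B.teleMap ns hmono h0 x).1 L) ((B.teleMap ns hmono h0 y).1 L) := hel
    obtain ⟨N0, hN0, hlt, hup0⟩ := hel'
    refine ⟨ns L + N0, hlt, ?_⟩
    intro n hn
    by_cases hc : n < ns (L + 1)
    · have hxy : x.1 (ns L + (n - ns L)) = y.1 (ns L + (n - ns L)) :=
        hup0 (n - ns L) (by omega) (by omega)
      have hn' : ns L + (n - ns L) = n := by omega
      exact hn' ▸ hxy
    · have hm1 : ns (tlvl ns n) ≤ n := tlvl_le ns h0 n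
      have hm2 : n < ns (tlvl ns n + 1) := tlvl_lt ns hmono n
      set m := tlvl ns n with hmdef
      have hLm : L < m := by
        by_contra hc2
        have : ns (m + 1) ≤ ns (L + 1) := hmono.monotone (by omega)
        omega
      have hblocks := hupL m hLm
      have hxy : x.1 (ns m + (n - ns m)) = y.1 (ns m + (n - ns m)) :=
        congrFun (congrArg (fun (f : B.TelE (ns m) (ns (m + 1))) => f.1) hblocks)
          ⟨n - ns m, by omega⟩
      have hn' : ns m + (n - ns m) = n := by omega
      exact hn' ▸ hxy

theorem telescope_min_unique (hproper : B.ProperlyOrdered)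
    {z w : (B.Telescope ns hmono h0).PathSpace}
    (hz : (B.Telescope ns hmono h0).IsMinPath z)
    (hw : (B.Telescope ns hmono h0).IsMinPath w) : z = w := by
  obtain ⟨x0, -, hx0⟩ := hproper.1
  have hz1 : B.IsMinPath (B.flatten ns hmono h0 z) :=
    (B.teleMap_minPath_iff ns hmono h0 _).1 (by rw [B.teleMap_flatten]; exact hz)
  have hw1 : B.IsMinPath (B.flatten ns hmono h0 w) :=
    (B.teleMap_minPath_iff ns hmono h0 _).1 (by rw [B.teleMap_flatten]; exact hw)
  have heq : B.flatten ns hmono h0 z = B.flatten ns hmono h0 w :=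
    (hx0 _ hz1).trans (hx0 _ hw1).symm
  calc z = B.teleMap ns hmono h0 (B.flatten ns hmono h0 z) := (B.teleMap_flatten ns hmono h0 z).symm
    _ = B.teleMap ns hmono h0 (B.flatten ns hmono h0 w) := by rw [heq]
    _ = w := B.teleMap_flatten ns hmono h0 w

theorem vershik_conj (T : B.PathSpace ≃ B.PathSpace)
    (T' : (B.Telescope ns hmono h0).PathSpace ≃ (B.Telescope ns hmono h0).PathSpace)
    (hproper : B.ProperlyOrdered) (hT : B.IsVershik T)
    (hT' : (B.Telescope ns hmono h0).IsVershik T') (x : B.PathSpace) :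
    T' (B.teleMap ns hmono h0 x) = B.teleMap ns hmono h0 (T x) := by
  by_cases hmax : B.IsMaxPath x
  · have h1 : (B.Telescope ns hmono h0).IsMaxPath (B.teleMap ns hmono h0 x) :=
      (B.teleMap_maxPath_iff ns hmono h0 x).2 hmax
    have h2 := hT'.2 _ h1
    have h4 : (B.Telescope ns hmono h0).IsMinPath (B.teleMap ns hmono h0 (T x)) :=
      (B.teleMap_minPath_iff ns hmono h0 _).2 (hT.2 x hmax)
    exact B.telescope_min_unique ns hmono h0 hproper h2 h4
  · have h1 : ¬ (B.Telescope ns hmono h0).IsMaxPath (B.teleMap ns hmono h0 x) :=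
      fun hc => hmax ((B.teleMap_maxPath_iff ns hmono h0 x).1 hc)
    have ha := hT'.1 _ h1
    have hb0 := hT.1 x hmax
    have hb : (B.Telescope ns hmono h0).pathLT (B.teleMap ns hmono h0 x)
          (B.teleMap ns hmono h0 (T x)) ∧
        ∀ z, (B.Telescope ns hmono h0).pathLT (B.teleMap ns hmono h0 x) z →
          ¬ (B.Telescope ns hmono h0).pathLT z (B.teleMap ns hmono h0 (T x)) := by
      refine ⟨(B.teleMap_pathLT_iff ns hmono h0 _ _).1 hb0.1, ?_⟩
      intro z hz hz2
      rw [(B.teleMap_flatten ns hmono h0 z).symm] at hz hz2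
      exact hb0.2 (B.flatten ns hmono h0 z)
        ((B.teleMap_pathLT_iff ns hmono h0 _ _).2 hz)
        ((B.teleMap_pathLT_iff ns hmono h0 _ _).2 hz2)
    exact (B.Telescope ns hmono h0).succ_unique _ _ _ ha hb

theorem iter_conj (T : B.PathSpace ≃ B.PathSpace)
    (T' : (B.Telescope ns hmono h0).PathSpace ≃ (B.Telescope ns hmono h0).PathSpace)
    (hconj : ∀ x, T' (B.teleMap ns hmono h0 x) = B.teleMap ns hmono h0 (T x))
    (m : ℤ) (x : B.PathSpace) :
    ((B.Telescope ns hmono h0).iterZ T' m) (B.teleMap ns hmono h0 x)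
      = B.teleMap ns hmono h0 ((B.iterZ T m) x) :=
  perm_conj_zpow (B.teleEquiv ns hmono h0) T T' hconj m x

theorem sameCoding_iff (T : B.PathSpace ≃ B.PathSpace)
    (T' : (B.Telescope ns hmono h0).PathSpace ≃ (B.Telescope ns hmono h0).PathSpace)
    (hconj : ∀ x, T' (B.teleMap ns hmono h0 x) = B.teleMap ns hmono h0 (T x))
    (r : ℕ) (x y : B.PathSpace) :
    (B.Telescope ns hmono h0).SameCoding T' r (B.teleMap ns hmono h0 x) (B.teleMap ns hmono h0 y)
      ↔ B.SameCoding T (ns r) x y := by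
  constructor
  · intro h m i hi
    have h1 : ns (tlvl ns i) ≤ i := tlvl_le ns h0 i
    have h2 : i < ns (tlvl ns i + 1) := tlvl_lt ns hmono i
    set l := tlvl ns i with hldef
    have hlr : l < r := by
      by_contra hc
      have : ns r ≤ ns l := hmono.monotone (by omega)
      omega
    have hb := h m l hlr
    rw [B.iter_conj ns hmono h0 T T' hconj m x, B.iter_conj ns hmono h0 T T' hconj m y] at hb
    have hxy : (B.iterZ T m x).1 (ns l + (i - ns l)) = (B.iterZ T m y).1 (ns l + (i - ns l)) :=
      congrFun (congrArg (fun (f : B.TelE (ns l) (ns (l + 1))) => f.1) hb) ⟨i - ns l, by omega⟩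
    have hn : ns l + (i - ns l) = i := by omega
    exact hn ▸ hxy
  · intro h m l hlr
    rw [B.iter_conj ns hmono h0 T T' hconj m x, B.iter_conj ns hmono h0 T T' hconj m y]
    refine Subtype.ext (funext fun i0 => ?_)
    have hi0 := i0.isLt
    have hle : ns (l + 1) ≤ ns r := hmono.monotone (by omega)
    exact h m (ns l + i0.val) (by omega)

theorem sameCoding_mono (T : B.PathSpace ≃ B.PathSpace) (k k' : ℕ) (hk : k' ≤ k)
    (x y : B.PathSpace) (h : B.SameCoding T k x y) : B.SameCoding T k' x y :=
  fun m i hi => h m i (lt_of_lt_of_le hi hk)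

end BDiagram
/-- If a simple, properly ordered Bratteli–Vershik system is
weakly well timed, then every telescoping of it is weakly well timed. -/
theorem weaklyWellTimed_telescoping
    (B : BDiagram) (T : B.PathSpace ≃ B.PathSpace)
    (hproper : B.ProperlyOrdered) (hsimple : B.Simple) (hT : B.IsVershik T)
    (ns : ℕ → ℕ) (hmono : StrictMono ns) (h0 : ns 0 = 0)
    (T' : (B.Telescope ns hmono h0).PathSpace ≃ (B.Telescope ns hmono h0).PathSpace)
    (hT' : (B.Telescope ns hmono h0).IsVershik T')
    (hww : B.WeaklyWellTimed T) :
    (B.Telescope ns hmono h0).WeaklyWellTimed T' := by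
  classical
  have hconj : ∀ x, T' (B.teleMap ns hmono h0 x) = B.teleMap ns hmono h0 (T x) :=
    B.vershik_conj ns hmono h0 T T' hproper hT hT'
  intro K'
  obtain ⟨k, hkK, hk1, hkprop⟩ := hww (ns (max K' 1))
  have hks : ns (tlvl ns k) ≤ k := tlvl_le ns h0 k
  have hks2 : k < ns (tlvl ns k + 1) := tlvl_lt ns hmono k
  set k' := tlvl ns k with hk'def
  have hk'K : max K' 1 ≤ k' := by
    by_contra hc
    have : ns (k' + 1) ≤ ns (max K' 1) := hmono.monotone (by omega)
    omega
  refine ⟨k', by omega, by omega, ?_⟩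
  intro j' hj'
  have hj : k < ns j' := by
    have : ns (k' + 1) ≤ ns j' := hmono.monotone (by omega)
    omega
  obtain ⟨x, y, ⟨hne, hsame, hnot⟩, hcut⟩ := hkprop (ns j') hj
  refine ⟨B.teleMap ns hmono h0 x, B.teleMap ns hmono h0 y, ⟨?_, ?_, ?_⟩, ?_⟩
  · intro hc
    exact hne ((B.teleEquiv ns hmono h0).injective hc)
  · exact (B.sameCoding_iff ns hmono h0 T T' hconj k' x y).2
      (B.sameCoding_mono T k (ns k') hks x y hsame)
  · intro hc
    have h2 := (B.sameCoding_iff ns hmono h0 T T' hconj (k' + 1) x y).1 hc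
    exact hnot (B.sameCoding_mono T (ns (k' + 1)) (k + 1) (by omega) x y h2)
  · obtain ⟨m, hmx, hmy⟩ := hcut
    refine ⟨m, ?_, ?_⟩
    · intro l hl
      rw [B.iter_conj ns hmono h0 T T' hconj m x]
      refine (B.tel_min_iff _).2 ?_
      intro i0 hi0
      have hle : ns (l + 1) ≤ ns j' := hmono.monotone (by omega)
      exact hmx (ns l + i0) (by omega)
    · intro l hl
      rw [B.iter_conj ns hmono h0 T T' hconj m y]
      refine (B.tel_min_iff _).2 ?_
      intro i0 hi0
      have hle : ns (l + 1) ≤ ns j' := hmono.monotone (by omega)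
      exact hmy (ns l + i0) (by omega)
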